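/- Let A ⊆ M be measurable and suppose there is a constant d_A ∈ ℝ^n with d(X, τ) = d_A for all X ∈ S(A). Then for every t ∈ ℝ, T_{t+τ}(S(A)) = T_t(A) + ν(A) · d_A. (This is the exact finite-time form of Eq. (29) of the paper, the order-k term of the wave-number expansion of the de Rham-type equation: T(φ^τ A) = T(A) + ν(A) d(X_{φ^τ A}, τ).) -/

import Mathlib

open MeasureTheory

lemma integrable_of_bdd {M : Type*} [MeasurableSpace M] (ν : Measure M)
    [IsFiniteMeasure ν] {n : ℕ} {f : M → Fin n → ℝ} (hf : Measurable f)
    {C : ℝ} (hC : ∀ X, ‖f X‖ ≤ C) : Integrable f ν := by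
  refine ⟨hf.aestronglyMeasurable, ?_⟩
  exact HasFiniteIntegral.of_bounded (C := C) (Filter.Eventually.of_forall hC)

/-- exact finite-time form of Eq. (29): if the time-τ
displacement is constant equal to `d_A` on `S(A)`, then
`T_{t+τ}(S(A)) = T_t(A) + ν(A) ⬝ d_A`, where `T_t(A) = ∫_A d(X,t) dν`. -/
theorem T_deRham_order_k {M : Type*} [MeasurableSpace M]
    (ν : Measure M) [IsFiniteMeasure ν] (hν : 0 < ν Set.univ)
    {n : ℕ} (hn : 1 ≤ n) (d : M → ℝ → Fin n → ℝ)
    (hdmeas : ∀ s : ℝ, Measurable fun X => d X s)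
    (hdbd : ∀ s : ℝ, ∃ C : ℝ, ∀ X : M, ‖d X s‖ ≤ C)
    (S : M ≃ M) (hS : MeasurePreserving S ν ν) (hS' : MeasurePreserving S.symm ν ν)
    (τ : ℝ)
    (hcocycle : ∀ (X : M) (t : ℝ), d X (t + τ) = d X τ + d (S.symm X) t)
    (A : Set M) (hA : MeasurableSet A)
    (dA : Fin n → ℝ) (hdA : ∀ X ∈ S '' A, d X τ = dA) :
    ∀ t : ℝ,
      (∫ X in S '' A, d X (t + τ) ∂ν)
        = (∫ X in A, d X t ∂ν) + (ν A).toReal • dA := by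
  intro t
  have hSemb : MeasurableEmbedding (S : M → M) :=
    (MeasurableEquiv.mk S hS.measurable hS'.measurable).measurableEmbedding
  have hSA : MeasurableSet ((S : M → M) '' A) := hSemb.measurableSet_image.mpr hA
  obtain ⟨C1, hC1⟩ := hdbd τ
  obtain ⟨C2, hC2⟩ := hdbd t
  have hint1 : Integrable (fun X => d X τ) (ν.restrict ((S : M → M) '' A)) :=
    (integrable_of_bdd ν (hdmeas τ) hC1).restrict
  have hmeas2 : Measurable (fun X => d (S.symm X) t) :=
    (hdmeas t).comp hS'.measurable
  have hint2 : Integrable (fun X => d (S.symm X) t) (ν.restrict ((S : M → M) '' A)) :=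
    (integrable_of_bdd ν hmeas2 (fun X => hC2 _)).restrict
  calc (∫ X in (S : M → M) '' A, d X (t + τ) ∂ν)
      = ∫ X in (S : M → M) '' A, (d X τ + d (S.symm X) t) ∂ν := by
        simp only [hcocycle]
    _ = (∫ X in (S : M → M) '' A, d X τ ∂ν)
        + ∫ X in (S : M → M) '' A, d (S.symm X) t ∂ν :=
        integral_add hint1 hint2
    _ = (ν A).toReal • dA + ∫ X in A, d X t ∂ν := by
        congr 1
        · have hmeq : ν ((S : M → M) '' A) = ν A := by
            rw [show (S : M → M) '' A = S.symm ⁻¹' A from Equiv.image_eq_preimage_symm _ _,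
              hS'.measure_preimage hA.nullMeasurableSet]
          rw [setIntegral_congr_fun hSA (fun X hX => hdA X hX), setIntegral_const, measureReal_def, hmeq]
        · rw [hS.setIntegral_image_emb hSemb]
          simp
    _ = (∫ X in A, d X t ∂ν) + (ν A).toReal • dA := add_comm _ _
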